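/- Let A : ℝ^N → ℝ^N be a C¹ vector potential with B_{jk} := ∂_j A_k − ∂_k A_j, let ℏ ∈ (0,1], let v ∈ 𝒮(ℝ^N), let f ∈ 𝒮(ℝ^N × ℝ^N), and let Z = (z,ζ) ∈ ℝ^N × ℝ^N. Then ⟨ v^A_ℏ(Z), Op^A_ℏ(f) v^A_ℏ(Z) ⟩_{L²} = (2πℏ)^{-N} ∫_{ℝ^N}∫_{ℝ^N}∫_{ℝ^N} e^{(i/ℏ)(x−y)·(η−ζ)} f((x+y)/2, η) e^{-(i/ℏ) Γ^B⟨z,x,y⟩} conj(v_ℏ(x−z)) v_ℏ(y−z) dη dy dx, where v_ℏ(x) := ℏ^{-N/4} v(x/√ℏ). In particular this quantity depends on A only through B. -/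

import Mathlib

open MeasureTheory Filter Topology Real

noncomputable section

abbrev Vec (N : ℕ) := Fin N → ℝ

/-- Circulation `Γ^A[x,y]` of the vector potential `A` along the segment from `x` to `y`. -/
def circA {N : ℕ} (A : Vec N → Vec N) (x y : Vec N) : ℝ :=
  ∫ s in (0:ℝ)..1, ∑ j, (y j - x j) * A (x + s • (y - x)) j

/-- Flux `Γ^B⟨a,b,c⟩` of the magnetic field `B` through the triangle with vertices
`a`, `b`, `c`, given by the standard parametrization. -/
def fluxB {N : ℕ} (B : Fin N → Fin N → Vec N → ℝ) (a b c : Vec N) : ℝ :=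
  ∑ j, ∑ k, (b j - a j) * (c k - b k) *
    ∫ μ in (0:ℝ)..1, ∫ ν in (0:ℝ)..1, μ * B j k (a + μ • (b - a) + (μ * ν) • (c - b))

/-- The magnetic field of a vector potential: `(Bof A) j k = ∂_j A_k - ∂_k A_j`. -/
def Bof {N : ℕ} (A : Vec N → Vec N) (j k : Fin N) (x : Vec N) : ℝ :=
  fderiv ℝ (fun y => A y k) x (Pi.single j 1) - fderiv ℝ (fun y => A y j) x (Pi.single k 1)

/-- The magnetic coherent vector `v^A_ℏ(Z)`, as a function on `ℝ^N`:
`[v^A_ℏ(Z)](x) = ℏ^{-N/4} e^{(i/ℏ)(x-z/2)·ζ} e^{(i/ℏ)Γ^A[z,x]} v((x-z)/√ℏ)`. -/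
def cohVec {N : ℕ} (A : Vec N → Vec N) (ℏ : ℝ) (v : Vec N → ℂ) (Z : Vec N × Vec N) :
    Vec N → ℂ :=
  fun x => (ℏ ^ (-(N:ℝ)/4) : ℝ) *
    Complex.exp (Complex.I / (ℏ:ℂ) * ((∑ j, (x j - Z.1 j / 2) * Z.2 j : ℝ) : ℂ)) *
    Complex.exp (Complex.I / (ℏ:ℂ) * ((circA A Z.1 x : ℝ) : ℂ)) *
    v ((Real.sqrt ℏ)⁻¹ • (x - Z.1))

/-- The `L²` inner product `⟨f,g⟩ = ∫ conj(f) g`, conjugate-linear in the first variable. -/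
def l2inner {N : ℕ} (f g : Vec N → ℂ) : ℂ :=
  ∫ x : Vec N, (starRingEnd ℂ) (f x) * g x

/-- The magnetic Weyl quantization `Op^A_ℏ(f)` applied to `u`, as a function on `ℝ^N`. -/
def opA {N : ℕ} (A : Vec N → Vec N) (ℏ : ℝ) (f : Vec N × Vec N → ℂ) (u : Vec N → ℂ) :
    Vec N → ℂ :=
  fun x => (((2*π*ℏ)^N : ℝ) : ℂ)⁻¹ * ∫ y : Vec N, ∫ η : Vec N,
    Complex.exp (Complex.I / (ℏ:ℂ) * ((∑ j, (x j - y j) * η j : ℝ) : ℂ)) *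
    Complex.exp (-(Complex.I / (ℏ:ℂ)) * ((circA A x y : ℝ) : ℂ)) *
    f ((2:ℝ)⁻¹ • (x + y), η) * u y

theorem clm_eval_sum {N : ℕ} (L : Vec N →L[ℝ] ℝ) (u : Vec N) :
    L u = ∑ j, u j * L (Pi.single j 1) := by
  have hu : u = ∑ j, u j • (Pi.single j 1 : Vec N) := by
    funext i
    simp [Finset.sum_apply, Pi.single_apply]
  conv_lhs => rw [hu]
  rw [map_sum]
  simp [smul_eq_mul]

theorem antisym_sum_zero {N : ℕ} (s : Fin N → ℝ) (M : Fin N → Fin N → ℝ)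
    (hM : ∀ j k, M j k = -M k j) :
    ∑ j, ∑ k, s j * s k * M j k = 0 := by
  have h2 : (∑ j, ∑ k, s j * s k * M j k) = ∑ j, ∑ k, s k * s j * M k j :=
    Finset.sum_comm
  have key : ∑ j, ∑ k, (s j * s k * M j k + s k * s j * M k j) = 0 := by
    apply Finset.sum_eq_zero; intro j _
    apply Finset.sum_eq_zero; intro k _
    rw [hM j k]; ring
  have expand : ∑ j, ∑ k, (s j * s k * M j k + s k * s j * M k j)
      = (∑ j, ∑ k, s j * s k * M j k) + ∑ j, ∑ k, s k * s j * M k j := by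
    rw [← Finset.sum_add_distrib]
    exact Finset.sum_congr rfl fun j _ => by rw [← Finset.sum_add_distrib]
  rw [expand, ← h2] at key
  linarith

theorem sum_intervalIntegral {ι : Type*} [Fintype ι] (F : ι → ℝ → ℝ)
    (hF : ∀ i, Continuous (F i)) :
    ∑ i, ∫ t in (0:ℝ)..1, F i t = ∫ t in (0:ℝ)..1, ∑ i, F i t :=
  (intervalIntegral.integral_finset_sum (fun i _ => (hF i).intervalIntegrable 0 1)).symm

set_option maxHeartbeats 2000000 in
theorem stokes_triangle {N : ℕ} (A : Vec N → Vec N) (hA : ContDiff ℝ 1 A) (a b c : Vec N) :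
    circA A a b + circA A b c - circA A a c = fluxB (Bof A) a b c := by
  classical
  set u : Vec N := b - a with hu
  set w : Vec N := c - b with hw
  set Φ : ℝ → ℝ → Vec N := fun μ ν => a + μ • u + (μ * ν) • w with hΦ
  have hAk : ∀ k : Fin N, ContDiff ℝ 1 (fun y => A y k) := fun k => (contDiff_pi.mp hA) k
  have hAkc : ∀ k : Fin N, Continuous (fun y => A y k) := fun k => (hAk k).continuous
  have hDc : ∀ k : Fin N, Continuous (fun x => fderiv ℝ (fun y => A y k) x) :=
    fun k => (hAk k).continuous_fderiv one_ne_zero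
  have hFd : ∀ (k : Fin N) (x : Vec N),
      HasFDerivAt (fun y => A y k) (fderiv ℝ (fun y => A y k) x) x :=
    fun k x => ((hAk k).differentiable one_ne_zero x).hasFDerivAt
  have hΦc : Continuous (fun p : ℝ × ℝ => Φ p.1 p.2) := by
    simp only [hΦ]; fun_prop
  -- derivative of Φ in μ
  have hΦμ : ∀ ν μ : ℝ, HasDerivAt (fun μ => Φ μ ν) (u + ν • w) μ := by
    intro ν μ
    have h1 : HasDerivAt (fun μ : ℝ => a + μ • u + (μ * ν) • w)
        ((0 : Vec N) + (1 : ℝ) • u + ν • w) μ := by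
      exact ((hasDerivAt_const μ a).add ((hasDerivAt_id μ).smul_const u)).add
        ((hasDerivAt_mul_const ν).smul_const w)
    simpa using h1
  have hΦν : ∀ μ ν : ℝ, HasDerivAt (fun ν => Φ μ ν) (μ • w) ν := by
    intro μ ν
    have h1 : HasDerivAt (fun ν : ℝ => a + μ • u + (μ * ν) • w) ((0 : Vec N) + μ • w) ν := by
      refine (hasDerivAt_const ν (a + μ • u)).add ?_
      have := ((hasDerivAt_id ν).const_mul μ).smul_const w
      simpa using this
    rw [zero_add] at h1
    exact h1
  set g : ℝ → ℝ → ℝ := fun μ ν => ∑ k, (μ * w k) * A (Φ μ ν) k with hg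
  set h : ℝ → ℝ → ℝ := fun μ ν => ∑ k, (u k + ν * w k) * A (Φ μ ν) k with hh
  set E : ℝ → ℝ → ℝ := fun μ ν => ∑ k,
    (w k * A (Φ μ ν) k + (μ * w k) * fderiv ℝ (fun y => A y k) (Φ μ ν) (u + ν • w)) with hE
  set D : ℝ → ℝ → ℝ := fun μ ν => ∑ k,
    (w k * A (Φ μ ν) k + (u k + ν * w k) * fderiv ℝ (fun y => A y k) (Φ μ ν) (μ • w)) with hD
  have hgE : ∀ ν μ : ℝ, HasDerivAt (fun μ => g μ ν) (E μ ν) μ := by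
    intro ν μ
    apply HasDerivAt.fun_sum
    intro k _
    have h2 : HasDerivAt (fun μ => A (Φ μ ν) k)
        (fderiv ℝ (fun y => A y k) (Φ μ ν) (u + ν • w)) μ :=
      (hFd k (Φ μ ν)).comp_hasDerivAt (f := fun μ => Φ μ ν) μ (hΦμ ν μ)
    simpa using (hasDerivAt_mul_const (w k)).fun_mul h2
  have hhD : ∀ μ ν : ℝ, HasDerivAt (fun ν => h μ ν) (D μ ν) ν := by
    intro μ ν
    apply HasDerivAt.fun_sum
    intro k _
    have h2 : HasDerivAt (fun ν => A (Φ μ ν) k)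
        (fderiv ℝ (fun y => A y k) (Φ μ ν) (μ • w)) ν :=
      (hFd k (Φ μ ν)).comp_hasDerivAt (f := fun ν => Φ μ ν) ν (hΦν μ ν)
    simpa using ((hasDerivAt_mul_const (w k)).const_add (u k)).fun_mul h2
  -- continuity of E and D jointly
  have hEc : Continuous (fun p : ℝ × ℝ => E p.1 p.2) := by
    apply continuous_finset_sum
    intro k _
    apply Continuous.add
    · exact continuous_const.mul (((hAkc k).comp hΦc))
    · refine (continuous_fst.mul continuous_const).mul ?_
      exact ((hDc k).comp hΦc).clm_apply (by fun_prop)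
  have hDc2 : Continuous (fun p : ℝ × ℝ => D p.1 p.2) := by
    apply continuous_finset_sum
    intro k _
    apply Continuous.add
    · exact continuous_const.mul (((hAkc k).comp hΦc))
    · refine (continuous_const.add (continuous_snd.mul continuous_const)).mul ?_
      exact ((hDc k).comp hΦc).clm_apply (by fun_prop)
  -- joint continuity of Bof composed with Φ
  have hBc : ∀ j k : Fin N, Continuous (fun p : ℝ × ℝ => Bof A j k (Φ p.1 p.2)) := by
    intro j k
    simp only [Bof]
    exact (((hDc k).comp hΦc).clm_apply continuous_const).sub
      (((hDc j).comp hΦc).clm_apply continuous_const)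
  -- pointwise identity E - D = ...
  have hED : ∀ μ ν : ℝ, E μ ν - D μ ν = ∑ j, ∑ k, u j * w k * (μ * Bof A j k (Φ μ ν)) := by
    intro μ ν
    have hM : ∀ (k : Fin N) (vv : Vec N), fderiv ℝ (fun y => A y k) (Φ μ ν) vv
        = ∑ j, vv j * fderiv ℝ (fun y => A y k) (Φ μ ν) (Pi.single j 1) :=
      fun k vv => clm_eval_sum _ vv
    have step1 : E μ ν - D μ ν
        = (∑ k, ∑ j, (u j + ν * w j) * (μ * w k) *
            fderiv ℝ (fun y => A y k) (Φ μ ν) (Pi.single j 1))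
          - ∑ k, ∑ j, (u k + ν * w k) * (μ * w j) *
            fderiv ℝ (fun y => A y k) (Φ μ ν) (Pi.single j 1) := by
      have per : ∀ k : Fin N,
          (w k * A (Φ μ ν) k + (μ * w k) * fderiv ℝ (fun y => A y k) (Φ μ ν) (u + ν • w))
          - (w k * A (Φ μ ν) k + (u k + ν * w k) * fderiv ℝ (fun y => A y k) (Φ μ ν) (μ • w))
          = (∑ j, (u j + ν * w j) * (μ * w k) *
              fderiv ℝ (fun y => A y k) (Φ μ ν) (Pi.single j 1))
            - ∑ j, (u k + ν * w k) * (μ * w j) *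
              fderiv ℝ (fun y => A y k) (Φ μ ν) (Pi.single j 1) := by
        intro k
        rw [hM k (u + ν • w), hM k (μ • w), Finset.mul_sum, Finset.mul_sum]
        rw [add_sub_add_left_eq_sub, ← Finset.sum_sub_distrib, ← Finset.sum_sub_distrib]
        apply Finset.sum_congr rfl; intro j _
        simp only [Pi.add_apply, Pi.smul_apply, smul_eq_mul]
        ring
      simp only [hE, hD]
      rw [← Finset.sum_sub_distrib]
      rw [Finset.sum_congr rfl (fun k _ => per k), Finset.sum_sub_distrib]
    have step2 : (∑ k, ∑ j, (u j + ν * w j) * (μ * w k) *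
            fderiv ℝ (fun y => A y k) (Φ μ ν) (Pi.single j 1))
        = ∑ j, ∑ k, (u j + ν * w j) * (μ * w k) *
            fderiv ℝ (fun y => A y k) (Φ μ ν) (Pi.single j 1) := Finset.sum_comm
    have step3 : E μ ν - D μ ν = ∑ j, ∑ k, (u j + ν * w j) * (μ * w k) * Bof A j k (Φ μ ν) := by
      rw [step1, step2, ← Finset.sum_sub_distrib]
      apply Finset.sum_congr rfl; intro j _
      rw [← Finset.sum_sub_distrib]
      apply Finset.sum_congr rfl; intro k _
      simp only [Bof]
      ring
    have hzero : ∑ j, ∑ k, w j * w k * Bof A j k (Φ μ ν) = 0 :=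
      antisym_sum_zero w _ (fun j k => by simp only [Bof]; ring)
    rw [step3]
    have expand : ∑ j, ∑ k, (u j + ν * w j) * (μ * w k) * Bof A j k (Φ μ ν)
        = (∑ j, ∑ k, u j * w k * (μ * Bof A j k (Φ μ ν)))
          + (ν * μ) * ∑ j, ∑ k, w j * w k * Bof A j k (Φ μ ν) := by
      rw [Finset.mul_sum, ← Finset.sum_add_distrib]
      apply Finset.sum_congr rfl; intro j _
      rw [Finset.mul_sum, ← Finset.sum_add_distrib]
      apply Finset.sum_congr rfl; intro k _
      ring
    rw [expand, hzero, mul_zero, add_zero]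
  -- basic one-variable continuity facts
  have hEcμ : ∀ ν : ℝ, Continuous (fun μ => E μ ν) :=
    fun ν => hEc.comp (continuous_id.prodMk continuous_const)
  have hEcν : ∀ μ : ℝ, Continuous (fun ν => E μ ν) :=
    fun μ => hEc.comp (continuous_const.prodMk continuous_id)
  have hDcν : ∀ μ : ℝ, Continuous (fun ν => D μ ν) :=
    fun μ => hDc2.comp (continuous_const.prodMk continuous_id)
  have hEint : Continuous (fun μ => ∫ ν in (0:ℝ)..1, E μ ν) :=
    intervalIntegral.continuous_parametric_intervalIntegral_of_continuous' (f := fun μ ν => E μ ν) hEc 0 1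
  have hDint : Continuous (fun μ => ∫ ν in (0:ℝ)..1, D μ ν) :=
    intervalIntegral.continuous_parametric_intervalIntegral_of_continuous' (f := fun μ ν => D μ ν) hDc2 0 1
  -- FTC in ν for D
  have hFTCν : ∀ μ : ℝ, ∫ ν in (0:ℝ)..1, D μ ν = h μ 1 - h μ 0 := by
    intro μ
    exact intervalIntegral.integral_eq_sub_of_hasDerivAt (fun ν _ => hhD μ ν)
      ((hDcν μ).intervalIntegrable 0 1)
  -- FTC in μ for E
  have hFTCμ : ∀ ν : ℝ, ∫ μ in (0:ℝ)..1, E μ ν = g 1 ν - g 0 ν := by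
    intro ν
    exact intervalIntegral.integral_eq_sub_of_hasDerivAt (fun μ _ => hgE ν μ)
      ((hEcμ ν).intervalIntegrable 0 1)
  -- Fubini for E
  have hswap : ∫ μ in (0:ℝ)..1, ∫ ν in (0:ℝ)..1, E μ ν
      = ∫ ν in (0:ℝ)..1, ∫ μ in (0:ℝ)..1, E μ ν := by
    simp only [intervalIntegral.integral_of_le (zero_le_one (α := ℝ))]
    apply MeasureTheory.integral_integral_swap
    rw [Measure.prod_restrict]
    exact (hEc.continuousOn.integrableOn_compact (isCompact_Icc.prod isCompact_Icc)).mono_set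
      (Set.prod_mono Set.Ioc_subset_Icc_self Set.Ioc_subset_Icc_self)
  -- boundary values
  have hgb : ∫ ν in (0:ℝ)..1, g 1 ν = circA A b c := by
    rw [circA]
    apply intervalIntegral.integral_congr
    intro ν _
    simp only [hg]
    apply Finset.sum_congr rfl; intro k _
    have hv : Φ 1 ν = b + ν • (c - b) := by
      simp only [hΦ, hu, hw, one_smul, one_mul]
      funext i; simp
    rw [hv]
    simp [hw]
  have hh0 : ∫ μ in (0:ℝ)..1, h μ 0 = circA A a b := by
    rw [circA]
    apply intervalIntegral.integral_congr
    intro μ _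
    simp only [hh]
    apply Finset.sum_congr rfl; intro k _
    have hv : Φ μ 0 = a + μ • (b - a) := by
      simp only [hΦ, hu, hw, mul_zero, zero_smul, add_zero]
    rw [hv]
    simp [hu]
  have hh1 : ∫ μ in (0:ℝ)..1, h μ 1 = circA A a c := by
    rw [circA]
    apply intervalIntegral.integral_congr
    intro μ _
    simp only [hh]
    apply Finset.sum_congr rfl; intro k _
    have hv : Φ μ 1 = a + μ • (c - a) := by
      simp only [hΦ, hu, hw, mul_one]
      funext i; simp; ring
    rw [hv]
    simp [hu, hw]
  -- ∫∫ E = circ b c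
  have hintE : ∫ μ in (0:ℝ)..1, ∫ ν in (0:ℝ)..1, E μ ν = circA A b c := by
    rw [hswap]
    have : ∀ ν : ℝ, ∫ μ in (0:ℝ)..1, E μ ν = g 1 ν := by
      intro ν
      rw [hFTCμ ν]
      have : g 0 ν = 0 := by simp [hg]
      rw [this, sub_zero]
    rw [intervalIntegral.integral_congr (fun ν _ => this ν)]
    exact hgb
  -- ∫∫ D = circ a c - circ a b
  have hintD : ∫ μ in (0:ℝ)..1, ∫ ν in (0:ℝ)..1, D μ ν = circA A a c - circA A a b := by
    have h1 : ∫ μ in (0:ℝ)..1, ∫ ν in (0:ℝ)..1, D μ ν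
        = ∫ μ in (0:ℝ)..1, (h μ 1 - h μ 0) :=
      intervalIntegral.integral_congr (fun μ _ => hFTCν μ)
    have hc1 : Continuous (fun μ => h μ 1) := by
      simp only [hh]
      apply continuous_finset_sum; intro k _
      exact continuous_const.mul ((hAkc k).comp (hΦc.comp (continuous_id.prodMk continuous_const)))
    have hc0 : Continuous (fun μ => h μ 0) := by
      simp only [hh]
      apply continuous_finset_sum; intro k _
      exact continuous_const.mul ((hAkc k).comp (hΦc.comp (continuous_id.prodMk continuous_const)))
    rw [h1, intervalIntegral.integral_sub (hc1.intervalIntegrable 0 1) (hc0.intervalIntegrable 0 1),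
      hh1, hh0]
  -- flux equals ∫∫ (E - D)
  have hfluxED : fluxB (Bof A) a b c = ∫ μ in (0:ℝ)..1, ∫ ν in (0:ℝ)..1, (E μ ν - D μ ν) := by
    have hgoal : fluxB (Bof A) a b c
        = ∑ j, ∑ k, u j * w k * ∫ μ in (0:ℝ)..1, ∫ ν in (0:ℝ)..1, μ * Bof A j k (Φ μ ν) := by
      rw [fluxB]
      apply Finset.sum_congr rfl; intro j _
      apply Finset.sum_congr rfl; intro k _
      rw [hu, hw]
      rfl
    rw [hgoal]
    have hBint : ∀ j k : Fin N, Continuous (fun μ => ∫ ν in (0:ℝ)..1, μ * Bof A j k (Φ μ ν)) := by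
      intro j k
      exact intervalIntegral.continuous_parametric_intervalIntegral_of_continuous'
        (f := fun μ ν => μ * Bof A j k (Φ μ ν)) (continuous_fst.mul (hBc j k)) 0 1
    have step : ∀ j k : Fin N, u j * w k * (∫ μ in (0:ℝ)..1, ∫ ν in (0:ℝ)..1, μ * Bof A j k (Φ μ ν))
        = ∫ μ in (0:ℝ)..1, ∫ ν in (0:ℝ)..1, u j * w k * (μ * Bof A j k (Φ μ ν)) := by
      intro j k
      rw [← intervalIntegral.integral_const_mul]
      apply intervalIntegral.integral_congr; intro μ _
      dsimp only
      rw [← intervalIntegral.integral_const_mul]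
    simp only [step]
    have hcν : ∀ (j k : Fin N) (μ : ℝ),
        Continuous (fun ν => u j * w k * (μ * Bof A j k (Φ μ ν))) := by
      intro j k μ
      exact continuous_const.mul (continuous_const.mul
        ((hBc j k).comp (continuous_const.prodMk continuous_id)))
    have hcμ : ∀ j k : Fin N,
        Continuous (fun μ => ∫ ν in (0:ℝ)..1, u j * w k * (μ * Bof A j k (Φ μ ν))) := by
      intro j k
      apply intervalIntegral.continuous_parametric_intervalIntegral_of_continuous'
        (f := fun μ ν => u j * w k * (μ * Bof A j k (Φ μ ν)))
      exact continuous_const.mul (continuous_fst.mul (hBc j k))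
    calc (∑ j, ∑ k, ∫ μ in (0:ℝ)..1, ∫ ν in (0:ℝ)..1, u j * w k * (μ * Bof A j k (Φ μ ν)))
        = ∑ j, ∫ μ in (0:ℝ)..1, ∑ k, ∫ ν in (0:ℝ)..1, u j * w k * (μ * Bof A j k (Φ μ ν)) :=
          Finset.sum_congr rfl fun j _ => sum_intervalIntegral _ (fun k => hcμ j k)
      _ = ∫ μ in (0:ℝ)..1, ∑ j, ∑ k, ∫ ν in (0:ℝ)..1, u j * w k * (μ * Bof A j k (Φ μ ν)) :=
          sum_intervalIntegral _ (fun j => by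
            apply continuous_finset_sum; intro k _; exact hcμ j k)
      _ = ∫ μ in (0:ℝ)..1, ∫ ν in (0:ℝ)..1, E μ ν - D μ ν := by
          apply intervalIntegral.integral_congr; intro μ _
          calc (∑ j, ∑ k, ∫ ν in (0:ℝ)..1, u j * w k * (μ * Bof A j k (Φ μ ν)))
              = ∑ j, ∫ ν in (0:ℝ)..1, ∑ k, u j * w k * (μ * Bof A j k (Φ μ ν)) :=
                Finset.sum_congr rfl fun j _ => sum_intervalIntegral _ (fun k => hcν j k μ)
            _ = ∫ ν in (0:ℝ)..1, ∑ j, ∑ k, u j * w k * (μ * Bof A j k (Φ μ ν)) :=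
                sum_intervalIntegral _ (fun j => by
                  apply continuous_finset_sum; intro k _; exact hcν j k μ)
            _ = ∫ ν in (0:ℝ)..1, E μ ν - D μ ν :=
                intervalIntegral.integral_congr fun ν _ => (hED μ ν).symm
  -- assemble
  have hsub : ∫ μ in (0:ℝ)..1, ∫ ν in (0:ℝ)..1, E μ ν - D μ ν
      = (∫ μ in (0:ℝ)..1, ∫ ν in (0:ℝ)..1, E μ ν)
        - ∫ μ in (0:ℝ)..1, ∫ ν in (0:ℝ)..1, D μ ν := by
    have h1 : ∀ μ : ℝ, ∫ ν in (0:ℝ)..1, E μ ν - D μ ν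
        = (∫ ν in (0:ℝ)..1, E μ ν) - ∫ ν in (0:ℝ)..1, D μ ν := fun μ =>
      intervalIntegral.integral_sub ((hEcν μ).intervalIntegrable 0 1)
        ((hDcν μ).intervalIntegrable 0 1)
    rw [intervalIntegral.integral_congr (fun μ _ => h1 μ)]
    exact intervalIntegral.integral_sub (hEint.intervalIntegrable 0 1)
      (hDint.intervalIntegrable 0 1)
  rw [hfluxED, hsub, hintE, hintD]
  ring


def Ef (ℏ t : ℝ) : ℂ := Complex.exp (Complex.I / (ℏ:ℂ) * (t:ℂ))

theorem Ef_fold (ℏ t : ℝ) : Complex.exp (Complex.I / (ℏ:ℂ) * (t:ℂ)) = Ef ℏ t := rfl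

theorem Ef_neg (ℏ t : ℝ) : Complex.exp (-(Complex.I / (ℏ:ℂ)) * (t:ℂ)) = Ef ℏ (-t) := by
  unfold Ef; congr 1; push_cast; ring

theorem Ef_conj (ℏ t : ℝ) : (starRingEnd ℂ) (Ef ℏ t) = Ef ℏ (-t) := by
  unfold Ef
  rw [← Complex.exp_conj]
  congr 1
  rw [map_mul, map_div₀, Complex.conj_I, Complex.conj_ofReal, Complex.conj_ofReal]
  push_cast; ring

theorem Ef_hom (ℏ s t : ℝ) : Ef ℏ s * Ef ℏ t = Ef ℏ (s + t) := by
  unfold Ef; rw [← Complex.exp_add]; push_cast; ring_nf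

/-- The expectation of `Op^A_ℏ(f)` in the coherent state `v^A_ℏ(Z)` is given by an explicit
integral depending on `A` only through `B = dA`. -/
theorem coherent_expectation_formula {N : ℕ} (A : Vec N → Vec N) (hA : ContDiff ℝ 1 A)
    (ℏ : ℝ) (hℏ : ℏ ∈ Set.Ioc (0:ℝ) 1) (v : SchwartzMap (Vec N) ℂ)
    (f : SchwartzMap (Vec N × Vec N) ℂ) (Z : Vec N × Vec N) :
    l2inner (cohVec A ℏ ⇑v Z) (opA A ℏ ⇑f (cohVec A ℏ ⇑v Z)) =
      (((2*π*ℏ)^N : ℝ) : ℂ)⁻¹ * ∫ x : Vec N, ∫ y : Vec N, ∫ η : Vec N,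
        Complex.exp (Complex.I/(ℏ:ℂ) * ((∑ j, (x j - y j) * (η j - Z.2 j) : ℝ) : ℂ)) *
        f ((2:ℝ)⁻¹ • (x + y), η) *
        Complex.exp (-(Complex.I/(ℏ:ℂ)) * ((fluxB (Bof A) Z.1 x y : ℝ) : ℂ)) *
        (starRingEnd ℂ) (((ℏ ^ (-(N:ℝ)/4) : ℝ) : ℂ) * v ((Real.sqrt ℏ)⁻¹ • (x - Z.1))) *
        (((ℏ ^ (-(N:ℝ)/4) : ℝ) : ℂ) * v ((Real.sqrt ℏ)⁻¹ • (y - Z.1))) := by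
  have key : ∀ x y η : Vec N,
      (starRingEnd ℂ) (cohVec A ℏ (⇑v) Z x) *
        (Complex.exp (Complex.I / (ℏ:ℂ) * ((∑ j, (x j - y j) * η j : ℝ) : ℂ)) *
          Complex.exp (-(Complex.I / (ℏ:ℂ)) * ((circA A x y : ℝ) : ℂ)) *
          f ((2:ℝ)⁻¹ • (x + y), η) * cohVec A ℏ (⇑v) Z y)
      = Complex.exp (Complex.I/(ℏ:ℂ) * ((∑ j, (x j - y j) * (η j - Z.2 j) : ℝ) : ℂ)) *
        f ((2:ℝ)⁻¹ • (x + y), η) *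
        Complex.exp (-(Complex.I/(ℏ:ℂ)) * ((fluxB (Bof A) Z.1 x y : ℝ) : ℂ)) *
        (starRingEnd ℂ) (((ℏ ^ (-(N:ℝ)/4) : ℝ) : ℂ) * v ((Real.sqrt ℏ)⁻¹ • (x - Z.1))) *
        (((ℏ ^ (-(N:ℝ)/4) : ℝ) : ℂ) * v ((Real.sqrt ℏ)⁻¹ • (y - Z.1))) := by
    intro x y η
    have hst := stokes_triangle A hA Z.1 x y
    have hsum : (∑ j, (x j - y j) * η j) - (∑ j, (x j - Z.1 j / 2) * Z.2 j)
        + (∑ j, (y j - Z.1 j / 2) * Z.2 j) = ∑ j, (x j - y j) * (η j - Z.2 j) := by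
      rw [← Finset.sum_sub_distrib, ← Finset.sum_add_distrib]
      exact Finset.sum_congr rfl fun j _ => by ring
    have hexp : Ef ℏ (-(∑ j, (x j - Z.1 j / 2) * Z.2 j)) * Ef ℏ (-(circA A Z.1 x))
          * Ef ℏ (∑ j, (x j - y j) * η j) * Ef ℏ (-(circA A x y))
          * Ef ℏ (∑ j, (y j - Z.1 j / 2) * Z.2 j) * Ef ℏ (circA A Z.1 y)
        = Ef ℏ (∑ j, (x j - y j) * (η j - Z.2 j)) * Ef ℏ (-(fluxB (Bof A) Z.1 x y)) := by
      simp only [Ef_hom]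
      congr 1
      linarith [hsum, hst]
    simp only [cohVec, map_mul, Complex.conj_ofReal, Ef_fold, Ef_neg, Ef_conj]
    linear_combination (((ℏ ^ (-(N:ℝ)/4) : ℝ) : ℂ) * ((ℏ ^ (-(N:ℝ)/4) : ℝ) : ℂ) *
      (starRingEnd ℂ) (v ((Real.sqrt ℏ)⁻¹ • (x - Z.1))) * (v ((Real.sqrt ℏ)⁻¹ • (y - Z.1))) *
      f ((2:ℝ)⁻¹ • (x + y), η)) * hexp
  rw [l2inner]
  have h1 : ∀ x : Vec N, (starRingEnd ℂ) (cohVec A ℏ (⇑v) Z x) * opA A ℏ (⇑f) (cohVec A ℏ (⇑v) Z) x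
      = (((2*π*ℏ)^N : ℝ) : ℂ)⁻¹ * ∫ y : Vec N, ∫ η : Vec N,
        Complex.exp (Complex.I/(ℏ:ℂ) * ((∑ j, (x j - y j) * (η j - Z.2 j) : ℝ) : ℂ)) *
        f ((2:ℝ)⁻¹ • (x + y), η) *
        Complex.exp (-(Complex.I/(ℏ:ℂ)) * ((fluxB (Bof A) Z.1 x y : ℝ) : ℂ)) *
        (starRingEnd ℂ) (((ℏ ^ (-(N:ℝ)/4) : ℝ) : ℂ) * v ((Real.sqrt ℏ)⁻¹ • (x - Z.1))) *
        (((ℏ ^ (-(N:ℝ)/4) : ℝ) : ℂ) * v ((Real.sqrt ℏ)⁻¹ • (y - Z.1))) := by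
    intro x
    rw [opA, mul_left_comm]
    congr 1
    rw [← MeasureTheory.integral_const_mul]
    apply MeasureTheory.integral_congr_ae
    filter_upwards with y
    rw [← MeasureTheory.integral_const_mul]
    apply MeasureTheory.integral_congr_ae
    filter_upwards with η
    exact key x y η
  rw [MeasureTheory.integral_congr_ae (Filter.Eventually.of_forall h1)]
  exact MeasureTheory.integral_const_mul _ _

end
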